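/- Let n ≥ 2 and let λ = (λ_1, …, λ_n) ∈ Γ_+ (i.e. λ_i > 0 for all i). Then σ_1(λ) − 4σ_2(λ)/σ_1(λ) + 3σ_3(λ)/σ_2(λ) ≥ 0, and equality holds if and only if λ_1 = λ_2 = ⋯ = λ_n. -/

import Mathlib

open Finset

/-- The `k`-th elementary symmetric polynomial of `lam : Fin n → ℝ`;
by convention `esymm 0 lam = 1` and `esymm k lam = 0` for `k > n`. -/
noncomputable def esymm {n : ℕ} (k : ℕ) (lam : Fin n → ℝ) : ℝ :=
  ∑ s ∈ Finset.univ.powersetCard k, ∏ i ∈ s, lam i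

lemma aeval_esymm' {n : ℕ} (k : ℕ) (lam : Fin n → ℝ) :
    MvPolynomial.aeval lam (MvPolynomial.esymm (Fin n) ℝ k) = esymm k lam := by
  simp [MvPolynomial.esymm, esymm, map_sum]

lemma aeval_psum' {n : ℕ} (k : ℕ) (lam : Fin n → ℝ) :
    MvPolynomial.aeval lam (MvPolynomial.psum (Fin n) ℝ k) = ∑ i, lam i ^ k := by
  simp [MvPolynomial.psum]

lemma newton2' {n : ℕ} (lam : Fin n → ℝ) :
    2 * esymm 2 lam = (∑ i, lam i)^2 - ∑ i, lam i ^ 2 := by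
  have h := MvPolynomial.mul_esymm_eq_sum (Fin n) ℝ 2
  have ha : (antidiagonal 2 : Finset (ℕ×ℕ)) = {(0,2),(1,1),(2,0)} := by decide
  rw [ha] at h
  norm_num [Finset.filter_insert, Finset.filter_singleton, Finset.sum_insert,
    Prod.ext_iff, MvPolynomial.esymm_zero] at h
  have h2 := congrArg (MvPolynomial.aeval lam) h
  simp only [map_mul, map_sub, map_add, map_neg, map_ofNat, map_sum, aeval_esymm', aeval_psum',
    MvPolynomial.aeval_X] at h2
  rw [h2]; ring

lemma newton3' {n : ℕ} (lam : Fin n → ℝ) :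
    3 * esymm 3 lam = ∑ i, lam i ^ 3 - (∑ i, lam i) * (∑ i, lam i ^ 2)
      + esymm 2 lam * (∑ i, lam i) := by
  have h := MvPolynomial.mul_esymm_eq_sum (Fin n) ℝ 3
  have ha : (antidiagonal 3 : Finset (ℕ×ℕ)) = {(0,3),(1,2),(2,1),(3,0)} := by decide
  rw [ha] at h
  norm_num [Finset.filter_insert, Finset.filter_singleton, Finset.sum_insert,
    Finset.mem_insert, Prod.ext_iff, MvPolynomial.esymm_zero] at h
  have h2 := congrArg (MvPolynomial.aeval lam) h
  simp only [map_mul, map_sub, map_add, map_neg, map_ofNat, map_sum, aeval_esymm', aeval_psum',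
    MvPolynomial.aeval_X] at h2
  rw [h2]; ring

lemma sq_ident' {n : ℕ} (lam : Fin n → ℝ) :
    ∑ i, ∑ j, lam i * lam j * (lam i - lam j)^2
      = 2*((∑ i, lam i) * (∑ i, lam i ^ 3) - (∑ i, lam i ^ 2)^2) := by
  calc ∑ i, ∑ j, lam i * lam j * (lam i - lam j)^2
      = ∑ i, ∑ j, (lam i^3*lam j + lam i*lam j^3 - 2*(lam i^2*lam j^2)) :=
        Finset.sum_congr rfl fun i _ => Finset.sum_congr rfl fun j _ => by ring
    _ = (∑ i, ∑ j, lam i^3*lam j) + (∑ i, ∑ j, lam i*lam j^3)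
          - 2*(∑ i, ∑ j, lam i^2*lam j^2) := by
        simp only [Finset.sum_add_distrib, Finset.sum_sub_distrib, ← Finset.mul_sum]
    _ = 2*((∑ i, lam i) * (∑ i, lam i ^ 3) - (∑ i, lam i ^ 2)^2) := by
        rw [← Finset.sum_mul_sum, ← Finset.sum_mul_sum, ← Finset.sum_mul_sum]; ring

theorem stmt_4 (n : ℕ) (hn : 2 ≤ n) (lam : Fin n → ℝ) (hpos : ∀ i, 0 < lam i) :
    0 ≤ esymm 1 lam - 4 * esymm 2 lam / esymm 1 lam
        + 3 * esymm 3 lam / esymm 2 lam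
    ∧ (esymm 1 lam - 4 * esymm 2 lam / esymm 1 lam
        + 3 * esymm 3 lam / esymm 2 lam = 0
      ↔ ∀ i j, lam i = lam j) := by
  have hnpos : 0 < n := by omega
  have hne : (Finset.univ : Finset (Fin n)).Nonempty := by
    simpa [Finset.univ_nonempty_iff] using Fin.pos_iff_nonempty.mp hnpos
  set p1 := ∑ i, lam i with hp1def
  set p2 := ∑ i, lam i ^ 2 with hp2def
  set p3 := ∑ i, lam i ^ 3 with hp3def
  have h1 : esymm 1 lam = p1 := by
    simp [esymm, Finset.powersetCard_one, Finset.sum_map]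
    rfl
  have hp1 : 0 < p1 := Finset.sum_pos (fun i _ => hpos i) hne
  have he2 : 0 < esymm 2 lam := by
    refine Finset.sum_pos (fun s hs => Finset.prod_pos fun i _ => hpos i) ?_
    apply Finset.powersetCard_nonempty.2
    simpa using hn
  set e2 := esymm 2 lam with he2def
  set e3 := esymm 3 lam with he3def
  have hE : p1^2*e2 - 4*e2^2 + 3*p1*e3 = p1*p3 - p2^2 := by
    linear_combination (p2 - 2*e2) * newton2' lam + p1 * newton3' lam
  have key : esymm 1 lam - 4 * e2 / esymm 1 lam + 3 * e3 / e2
      = (p1*p3 - p2^2)/(p1*e2) := by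
    rw [h1, ← hE]; field_simp
  have hSnn : ∀ i ∈ (Finset.univ : Finset (Fin n)),
      0 ≤ ∑ j, lam i * lam j * (lam i - lam j)^2 := by
    intro i _
    exact Finset.sum_nonneg fun j _ =>
      mul_nonneg (mul_nonneg (hpos i).le (hpos j).le) (sq_nonneg _)
  have hS : 0 ≤ p1*p3 - p2^2 := by
    have := sq_ident' lam
    nlinarith [Finset.sum_nonneg hSnn]
  constructor
  · rw [key]
    exact div_nonneg hS (mul_nonneg hp1.le he2.le)
  · rw [key]
    rw [div_eq_zero_iff]
    have hden : p1 * e2 ≠ 0 := (mul_pos hp1 he2).ne'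
    simp only [hden, or_false]
    constructor
    · intro h0
      have hSz : ∑ i, ∑ j, lam i * lam j * (lam i - lam j)^2 = 0 := by
        rw [sq_ident', h0]; ring
      rw [Finset.sum_eq_zero_iff_of_nonneg hSnn] at hSz
      intro i j
      have hz := hSz i (Finset.mem_univ i)
      rw [Finset.sum_eq_zero_iff_of_nonneg (fun j _ =>
        mul_nonneg (mul_nonneg (hpos i).le (hpos j).le) (sq_nonneg _))] at hz
      have := hz j (Finset.mem_univ j)
      have h2 : (lam i - lam j)^2 = 0 := by
        rcases mul_eq_zero.1 this with h | h
        · exact absurd h (mul_pos (hpos i) (hpos j)).ne'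
        · exact h
      have := pow_eq_zero_iff (n := 2) (by norm_num) |>.1 h2
      linarith
    · intro hall
      have hSz : ∑ i, ∑ j, lam i * lam j * (lam i - lam j)^2 = 0 :=
        Finset.sum_eq_zero fun i _ => Finset.sum_eq_zero fun j _ => by
          rw [hall i j]; ring
      have := sq_ident' lam
      linarith [this ▸ hSz]
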